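/- Let Γ be a finite connected pentavalent graph, let G ≤ Aut Γ act arc-transitively on Γ, and let N be a normal subgroup of G. If the stabilizer N_α is nontrivial for some vertex α, then 5 divides |N_α|. -/
import Mathlib

set_option synthInstance.maxHeartbeats 1000000
set_option maxHeartbeats 1000000

/-- The automorphism group of a simple graph acts on its vertices. -/
instance graphAutMulAction {V : Type*} {Γ : SimpleGraph V} : MulAction (Γ ≃g Γ) V where
  smul g v := g v
  one_smul _ := rfl
  mul_smul _ _ _ := rfl

section aux
variable {V : Type*} {Γ : SimpleGraph V}

lemma aut_smul_def (g : Γ ≃g Γ) (v : V) : g • v = g v := rfl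

/-- The neighborhood of `α` as a sub-action of the stabilizer of `α`. -/
def nbhdSubMulAction (G : Subgroup (Γ ≃g Γ)) (α : V) :
    SubMulAction (MulAction.stabilizer G α) V where
  carrier := Γ.neighborSet α
  smul_mem' := by
    rintro ⟨⟨g, hgG⟩, hg⟩ x hx
    have hgα : g α = α := hg
    have h2 : Γ.Adj (g α) (g x) := g.map_adj_iff.mpr hx
    show Γ.Adj α (g x)
    rw [← hgα]
    exact h2

end aux

/-- If `N` is a normal subgroup of an arc-transitive group of automorphisms of a connected
pentavalent graph and some vertex stabilizer `N_α` is nontrivial, then `5` divides `|N_α|`. -/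
theorem five_dvd_nontrivial_normal_stabilizer
    {V : Type*} [Fintype V] (Γ : SimpleGraph V) [DecidableRel Γ.Adj]
    (hconn : Γ.Connected) (hdeg : ∀ v : V, Γ.degree v = 5)
    (G : Subgroup (Γ ≃g Γ))
    (harc : ∀ ⦃u v u' v' : V⦄, Γ.Adj u v → Γ.Adj u' v' →
      ∃ g ∈ G, g • u = u' ∧ g • v = v')
    (N : Subgroup G) (hnorm : N.Normal) (α : V)
    (hne : MulAction.stabilizer N α ≠ ⊥) :
    5 ∣ Nat.card (MulAction.stabilizer N α) := by
  classical
  set K := MulAction.stabilizer G α with hKdef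
  set S := nbhdSubMulAction G α with hSdef
  set M0 := N.subgroupOf K with hM0def
  haveI hM0norm : M0.Normal := by
    constructor
    intro n hn k
    rw [hM0def, Subgroup.mem_subgroupOf] at hn ⊢
    simpa using hnorm.conj_mem _ hn (k : G)
  -- pretransitivity of K on S
  haveI htrans : MulAction.IsPretransitive K S := by
    constructor
    rintro ⟨s, hs⟩ ⟨t, ht⟩
    obtain ⟨g, hgG, hgα, hgs⟩ := harc hs ht
    exact ⟨⟨⟨g, hgG⟩, hgα⟩, Subtype.ext hgs⟩
  have hcard5 : Nat.card S = 5 := by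
    have e : (S : Type _) ≃ ↥(Γ.neighborSet α) :=
      Equiv.subtypeEquivRight (fun x => Iff.rfl)
    rw [Nat.card_congr e, Nat.card_eq_fintype_card,
      SimpleGraph.card_neighborSet_eq_degree, hdeg]
  by_cases htriv : ∀ (m : M0) (x : S), m • x = x
  · -- trivial action on neighborhood : contradiction with hne
    exfalso
    set N' : Subgroup (Γ ≃g Γ) := N.map G.subtype with hN'def
    have hconj : ∀ g ∈ G, ∀ n ∈ N', g * n * g⁻¹ ∈ N' := by
      rintro g hg n hn
      obtain ⟨n₀, hn₀, rfl⟩ := hn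
      exact ⟨(⟨g, hg⟩ : G) * n₀ * (⟨g, hg⟩ : G)⁻¹,
        hnorm.conj_mem n₀ hn₀ ⟨g, hg⟩, rfl⟩
    have hfixα : ∀ n ∈ N', n • α = α → ∀ w, Γ.Adj α w → n • w = w := by
      rintro n hn hnα w hw
      obtain ⟨n₀, hn₀N, rfl⟩ := hn
      have hk : (n₀ : G) ∈ K := hnα
      have hm : (⟨n₀, hk⟩ : K) ∈ M0 := Subgroup.mem_subgroupOf.mpr hn₀N
      exact congrArg Subtype.val (htriv ⟨⟨n₀, hk⟩, hm⟩ ⟨w, hw⟩)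
    have hfixany : ∀ (β : V), ∀ n ∈ N', n • β = β → ∀ w, Γ.Adj β w → n • w = w := by
      intro β n hn hnβ w hw
      obtain ⟨s0, hs0⟩ : ∃ s0, Γ.Adj α s0 := by
        have h5 : 0 < Γ.degree α := by rw [hdeg]; norm_num
        exact (Γ.degree_pos_iff_exists_adj α).mp h5
      obtain ⟨g, hgG, hgα, -⟩ := harc hs0 hw
      have hn' : g⁻¹ * n * g ∈ N' := by
        have := hconj g⁻¹ (inv_mem hgG) n hn
        simpa using this
      have hn'α : (g⁻¹ * n * g) • α = α := by
        rw [mul_smul, mul_smul, hgα, hnβ, ← hgα, inv_smul_smul]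
      have hadj : Γ.Adj α (g⁻¹ • w) := by
        have := (g⁻¹ : Γ ≃g Γ).map_adj_iff.mpr hw
        rwa [show (g⁻¹ : Γ ≃g Γ) β = g⁻¹ • β from rfl,
          show (g⁻¹ : Γ ≃g Γ) w = g⁻¹ • w from rfl, ← hgα, inv_smul_smul] at this
      have h3 := hfixα _ hn' hn'α _ hadj
      rw [mul_smul, mul_smul, smul_inv_smul] at h3
      exact MulAction.injective (g⁻¹ : Γ ≃g Γ) h3
    have hall : ∀ n : Γ ≃g Γ, n ∈ N' → n • α = α → ∀ v : V, n • v = v := by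
      intro n hn hnα v
      obtain ⟨p⟩ := (hconn.preconnected α v)
      have key : ∀ u w : V, Γ.Walk u w → n • u = u → n • w = w := by
        intro u w q
        induction q with
        | nil => exact fun h => h
        | cons h q ih => exact fun hu => ih (hfixany _ n hn hu _ h)
      exact key α v p hnα
    apply hne
    rw [Subgroup.eq_bot_iff_forall]
    intro x hx
    have hxN' : ((x : G) : Γ ≃g Γ) ∈ N' := ⟨(x : G), x.2, rfl⟩
    have hxα : ((x : G) : Γ ≃g Γ) • α = α := hx
    have hone : ((x : G) : Γ ≃g Γ) = 1 := by
      apply RelIso.ext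
      intro v
      exact hall _ hxN' hxα v
    exact Subtype.ext (Subtype.ext hone)
  · push_neg at htriv
    obtain ⟨m, x, hmx⟩ := htriv
    set B : Set S := MulAction.orbit M0 x with hBdef
    have hBblock : MulAction.IsBlock K B := MulAction.IsBlock.orbit_of_normal x
    have hBne : B.Nonempty := ⟨x, MulAction.mem_orbit_self x⟩
    have hdvd : B.ncard ∣ 5 := by
      have := hBblock.ncard_dvd_card hBne
      rwa [hcard5] at this
    have h2 : 1 < B.ncard := by
      rw [Set.one_lt_ncard_iff B.toFinite]
      exact ⟨m • x, x, MulAction.mem_orbit x m, MulAction.mem_orbit_self x, hmx⟩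
    have hB5 : B.ncard = 5 := by
      rcases (by norm_num : Nat.Prime 5).eq_one_or_self_of_dvd _ hdvd with h | h
      · omega
      · exact h
    have hdvdM0 : 5 ∣ Nat.card M0 := by
      rw [← hB5, ← Nat.card_coe_set_eq]
      rw [hBdef, Nat.card_congr (MulAction.orbitEquivQuotientStabilizer M0 x)]
      exact Subgroup.card_quotient_dvd_card _
    have hcardEq : Nat.card M0 = Nat.card (MulAction.stabilizer N α) := by
      refine Nat.card_congr ⟨fun m => ⟨⟨(m.1 : G), Subgroup.mem_subgroupOf.mp m.2⟩, m.1.2⟩,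
        fun x => ⟨⟨(x.1 : G), x.2⟩, Subgroup.mem_subgroupOf.mpr x.1.2⟩, fun m => rfl, fun x => rfl⟩
    rwa [hcardEq] at hdvdM0
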